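/- Let K be a field of characteristic 0 and F = {(x - a_i)^{e_i} : 1 ≤ i ≤ s} a family of pairwise distinct shifted powers whose span does not contain the constant polynomial 1. Then for any natural number e, the number of distinct b ∈ K such that (x - b)^e lies in the span of F is at most 2s - 1. -/

import Mathlib

open Polynomial

-- core independence for exactly d+1 points
lemma indep_core {K : Type*} [Field K] [CharZero K] (d : ℕ) (b : Fin (d+1) → K)
    (hb : Function.Injective b) :
    LinearIndependent K (fun j => (X - C (b j)) ^ d) := by
  classical
  set v : Fin (d+1) → K := fun j => -(b j) with hv
  set M : Matrix (Fin (d+1)) (Fin (d+1)) K :=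
    ((Matrix.vandermonde v).submatrix id Fin.revPerm) *
      Matrix.diagonal (fun k : Fin (d+1) => (d.choose k : K)) with hM
  have hdet : M.det ≠ 0 := by
    rw [hM, Matrix.det_mul, Matrix.det_permute' Fin.revPerm, Matrix.det_diagonal]
    apply mul_ne_zero
    · apply mul_ne_zero
      · rcases Int.units_eq_one_or (Equiv.Perm.sign (Fin.revPerm (n := d+1))) with h | h <;>
          simp [h]
      · rw [Matrix.det_vandermonde_ne_zero_iff]
        exact fun i j hij => hb (by simpa [hv, neg_inj] using hij)
    · apply Finset.prod_ne_zero_iff.mpr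
      intro k _
      exact Nat.cast_ne_zero.mpr (Nat.choose_pos (Nat.lt_succ_iff.mp k.isLt)).ne'
  have hrows : LinearIndependent K (fun j => M j) :=
    Matrix.linearIndependent_rows_iff_isUnit.mpr
      ((Matrix.isUnit_iff_isUnit_det M).mpr (isUnit_iff_ne_zero.mpr hdet))
  apply LinearIndependent.of_comp (LinearMap.pi fun k : Fin (d+1) => lcoeff K k)
  convert hrows using 1
  funext j k
  simp only [LinearMap.pi_apply, lcoeff_apply, Function.comp]
  have : X - C (b j) = X + C (v j) := by simp [hv, sub_eq_add_neg, map_neg]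
  rw [this, coeff_X_add_C_pow]
  simp [hM, Matrix.mul_diagonal, Matrix.submatrix_apply, Matrix.vandermonde_apply]
  rfl

-- independence for any finset of at most d+1 points
lemma indep_finset {K : Type*} [Field K] [CharZero K] (d : ℕ) (T : Finset K)
    (hT : T.card ≤ d + 1) :
    LinearIndependent K (fun t : T => (X - C (t : K)) ^ d) := by
  classical
  obtain ⟨T', hTT', hT'⟩ := Infinite.exists_superset_card_eq T (d + 1) hT
  let eqv : T' ≃ Fin (d + 1) := T'.equivFinOfCardEq hT'
  have hb : Function.Injective (fun j : Fin (d+1) => ((eqv.symm j : K))) := by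
    intro i j hij
    have : (eqv.symm i : T') = eqv.symm j := Subtype.ext hij
    simpa using eqv.symm.injective this
  have hli := indep_core d _ hb
  have := hli.comp (fun t : T => eqv ⟨(t : K), hTT' t.2⟩)
    (by intro x y h
        have := eqv.injective h
        have h2 : (x : K) = (y : K) := congrArg (Subtype.val : T' → K) this
        exact Subtype.ext h2)
  convert this using 1
  funext t
  simp

theorem stmt14 (K : Type*) [Field K] [CharZero K] (s : ℕ)
    (a : Fin s → K) (e : Fin s → ℕ)
    (hdist : Function.Injective (fun i => (a i, e i)))
    (hone : (1 : Polynomial K) ∉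
      Submodule.span K (Set.range fun i => (X - C (a i)) ^ (e i))) :
    ∀ d : ℕ,
      {b : K | (X - C b) ^ d ∈
        Submodule.span K (Set.range fun i => (X - C (a i)) ^ (e i))}.ncard ≤
      2 * s - 1 := by
  classical
  intro d
  set V := Submodule.span K (Set.range fun i => (X - C (a i)) ^ (e i)) with hV
  set S := {b : K | (X - C b) ^ d ∈ V} with hS
  have key : ∀ T : Finset K, ↑T ⊆ S → T.card ≤ 2 * s - 1 := by
    intro T hTS
    rcases Nat.eq_zero_or_pos d with rfl | hd
    · have : T = ∅ := by
        rw [Finset.eq_empty_iff_forall_notMem]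
        intro b hb
        exact hone (by simpa [hS] using hTS hb)
      simp [this]
    rcases Nat.eq_zero_or_pos s with rfl | hs
    · have : T = ∅ := by
        rw [Finset.eq_empty_iff_forall_notMem]
        intro b hb
        have hmem : (X - C b) ^ d ∈ V := hTS hb
        have : V = ⊥ := by
          rw [hV]
          convert Submodule.span_empty
          simp [Set.range_eq_empty]
        rw [this, Submodule.mem_bot] at hmem
        exact (((monic_X_sub_C b).pow d).ne_zero) hmem
      simp [this]
    -- main case : d ≥ 1, s ≥ 1. Show T.card ≤ s.
    have hcard : T.card ≤ s := by
      by_contra hgt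
      push_neg at hgt
      rcases le_or_gt T.card d with hle | hlt
      · -- independence inside V, dim V ≤ s
        have hli := indep_finset d T (hle.trans (Nat.le_succ d))
        have hmemV : ∀ t : T, (X - C (t : K)) ^ d ∈ V := fun t => hTS t.2
        let f : T → V := fun t => ⟨(X - C (t : K)) ^ d, hmemV t⟩
        have hliV : LinearIndependent K f := by
          apply LinearIndependent.of_comp V.subtype
          convert hli using 1
          rfl
        haveI : Module.Finite K V := by
          rw [hV]
          exact FiniteDimensional.span_of_finite K (Set.finite_range _)
        have h1 : Fintype.card T ≤ Module.finrank K V :=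
          hliV.fintype_card_le_finrank
        have h2 : Module.finrank K V ≤ s := by
          have := finrank_range_le_card (R := K) (fun i : Fin s => (X - C (a i)) ^ (e i))
          simpa [Set.finrank, hV] using this
        rw [Fintype.card_coe] at h1
        omega
      · -- many points : 1 ∈ V, contradiction
        obtain ⟨T'', hsub, hc⟩ := Finset.exists_subset_card_eq (Nat.succ_le_of_lt hlt)
        have hli := indep_finset d T'' hc.le
        -- work in degreeLT K (d+1)
        have hmemW : ∀ t : T'', (X - C (t : K)) ^ d ∈ degreeLT K (d + 1) := by
          intro t
          rw [mem_degreeLT, degree_pow, degree_X_sub_C]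
          simp
          exact_mod_cast Nat.lt_succ_self d
        let g : T'' → degreeLT K (d + 1) := fun t => ⟨(X - C (t : K)) ^ d, hmemW t⟩
        have hliW : LinearIndependent K g := by
          apply LinearIndependent.of_comp (degreeLT K (d + 1)).subtype
          convert hli using 1
          rfl
        have hfr : Fintype.card T'' = Module.finrank K (degreeLT K (d + 1)) := by
          rw [Fintype.card_coe, hc, (degreeLTEquiv K (d+1)).finrank_eq]
          simp
        haveI : Nonempty T'' := Finset.nonempty_coe_sort.mpr
          (Finset.card_pos.mp (by omega))
        let B := basisOfLinearIndependentOfCardEqFinrank hliW hfr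
        have h1W : (1 : Polynomial K) ∈ degreeLT K (d + 1) := by
          rw [mem_degreeLT, degree_one]
          exact_mod_cast Nat.succ_pos d
        have : (⟨1, h1W⟩ : degreeLT K (d + 1)) ∈ Submodule.span K (Set.range g) := by
          rw [show Set.range g = Set.range B from by
            rw [coe_basisOfLinearIndependentOfCardEqFinrank]]
          rw [B.span_eq]
          trivial
        have h1span : (1 : Polynomial K) ∈
            Submodule.span K (Set.range fun t : T'' => (X - C (t : K)) ^ d) := by
          have := Submodule.mem_map_of_mem (f := (degreeLT K (d+1)).subtype) this
          rw [Submodule.map_span, ← Set.range_comp] at this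
          simpa [g, Function.comp_def] using this
        apply hone
        refine Submodule.span_le.mpr ?_ h1span
        rintro _ ⟨t, rfl⟩
        exact hTS (hsub t.2)
    omega
  rcases S.finite_or_infinite with hfin | hinf
  · have : S.ncard = hfin.toFinset.card := by
      rw [← Set.ncard_coe_finset, hfin.coe_toFinset]
    rw [this]
    exact key _ (by simp)
  · rw [hinf.ncard]
    exact Nat.zero_le _
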